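/- Let A be a continuous matrix-valued function on an interval I, and for s ∈ I let Φ_A(·; s) denote the sum of the Peano–Baker series with base point s. Then the flow property holds: Φ_A(t; s) · Φ_A(s; t₀) = Φ_A(t; t₀) for all t, s, t₀ ∈ I. -/

import Mathlib

attribute [local instance] Matrix.normedAddCommGroup Matrix.normedSpace

/-- The iterated Peano–Baker integrals with base point `t₀`: `pbIter A t₀ 0 = 1` (identity
matrix) and `pbIter A t₀ (n+1) t = ∫_{t₀}^t A τ * pbIter A t₀ n τ dτ`. -/
noncomputable def pbIter {d : ℕ} (A : ℝ → Matrix (Fin d) (Fin d) ℝ) (t₀ : ℝ) :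
    ℕ → ℝ → Matrix (Fin d) (Fin d) ℝ
  | 0 => fun _ => 1
  | n + 1 => fun t => ∫ τ in t₀..t, A τ * pbIter A t₀ n τ

section Aux
open MeasureTheory Set Finset intervalIntegral

variable {d : ℕ} {A : ℝ → Matrix (Fin d) (Fin d) ℝ} {a b : ℝ}

private noncomputable instance pb_enormedAddMonoid {d : ℕ} :
    ENormedAddMonoid (Matrix (Fin d) (Fin d) ℝ) :=
  NormedAddCommGroup.toENormedAddCommMonoid.toENormedAddMonoid

private lemma pb_norm_mul_le (X Y : Matrix (Fin d) (Fin d) ℝ) :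
    ‖X * Y‖ ≤ d * ‖X‖ * ‖Y‖ := by
  rw [Matrix.norm_le_iff (by positivity)]
  intro i j
  calc ‖(X * Y) i j‖ = ‖∑ k, X i k * Y k j‖ := by rw [Matrix.mul_apply]
    _ ≤ ∑ k, ‖X i k * Y k j‖ := norm_sum_le _ _
    _ ≤ ∑ _k : Fin d, ‖X‖ * ‖Y‖ := by
        refine Finset.sum_le_sum fun k _ => ?_
        rw [norm_mul]
        exact mul_le_mul (Matrix.norm_entry_le_entrywise_sup_norm X)
          (Matrix.norm_entry_le_entrywise_sup_norm Y) (norm_nonneg _) (norm_nonneg _)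
    _ = d * ‖X‖ * ‖Y‖ := by simp [mul_assoc]

private lemma pb_norm_one_le : ‖(1 : Matrix (Fin d) (Fin d) ℝ)‖ ≤ 1 := by
  rw [Matrix.norm_le_iff zero_le_one]
  intro i j
  by_cases h : i = j <;> simp [Matrix.one_apply, h]

private lemma pb_contOn (hA : ContinuousOn A (Set.Icc a b)) {c : ℝ} (hc : c ∈ Set.Icc a b) :
    ∀ n, ContinuousOn (pbIter A c n) (Set.Icc a b)
  | 0 => continuousOn_const
  | (n + 1) => by
      have hab : a ≤ b := hc.1.trans hc.2
      have h1 : ContinuousOn (fun τ => A τ * pbIter A c n τ) (Set.Icc a b) :=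
        hA.mul (pb_contOn hA hc n)
      have h2 : IntervalIntegrable (fun τ => A τ * pbIter A c n τ) volume a b :=
        (h1.mono (by rw [Set.uIcc_of_le hab])).intervalIntegrable
      have h3 := intervalIntegral.continuousOn_primitive_interval' h2
        (by rw [Set.uIcc_of_le hab]; exact hc)
      rw [Set.uIcc_of_le hab] at h3
      exact h3

private lemma pb_intInt (hA : ContinuousOn A (Set.Icc a b)) {c : ℝ} (hc : c ∈ Set.Icc a b)
    (n : ℕ) {x y : ℝ} (hx : x ∈ Set.Icc a b) (hy : y ∈ Set.Icc a b) :
    IntervalIntegrable (fun τ => A τ * pbIter A c n τ) volume x y :=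
  ((hA.mul (pb_contOn hA hc n)).mono (Set.uIcc_subset_Icc hx hy)).intervalIntegrable

private lemma pb_integral_abs_pow_nonneg (n : ℕ) {x : ℝ} (hx : 0 ≤ x) :
    ∫ u in (0:ℝ)..x, |u| ^ n = x ^ (n + 1) / (n + 1) := by
  rw [intervalIntegral.integral_congr (g := fun u : ℝ => u ^ n), integral_pow]
  · simp
  · intro u hu
    rw [Set.uIcc_of_le hx] at hu
    simp only
    rw [abs_of_nonneg hu.1]

private lemma pb_abs_integral_abs_pow (n : ℕ) (c t : ℝ) :
    |∫ τ in c..t, |τ - c| ^ n| = |t - c| ^ (n + 1) / (n + 1) := by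
  have h := intervalIntegral.integral_comp_sub_right (a := c) (b := t)
    (fun u : ℝ => |u| ^ n) c
  rw [h, sub_self]
  rcases le_total 0 (t - c) with h0 | h0
  · rw [pb_integral_abs_pow_nonneg n h0, abs_div, abs_pow,
      abs_of_nonneg (by positivity : (0:ℝ) ≤ (n:ℝ)+1)]
  · have h1 : (∫ u in (0:ℝ)..(t - c), |u| ^ n) = ∫ u in (0:ℝ)..(t - c), |(-u)| ^ n := by
      simp
    rw [h1, intervalIntegral.integral_comp_neg (f := fun v : ℝ => |v| ^ n), neg_zero,
      intervalIntegral.integral_symm 0 (-(t - c)),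
      pb_integral_abs_pow_nonneg n (neg_nonneg.2 h0),
      abs_neg, abs_div, abs_pow, abs_neg,
      abs_of_nonneg (by positivity : (0:ℝ) ≤ (n:ℝ)+1)]

private lemma pb_norm_le (hA : ContinuousOn A (Set.Icc a b)) {c : ℝ} (hc : c ∈ Set.Icc a b)
    {M : ℝ} (hM0 : 0 ≤ M) (hM : ∀ τ ∈ Set.Icc a b, ‖A τ‖ ≤ M) :
    ∀ n, ∀ t ∈ Set.Icc a b,
      ‖pbIter A c n t‖ ≤ (d * M) ^ n * |t - c| ^ n / n.factorial
  | 0 => by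
      intro t ht
      simpa [pbIter] using pb_norm_one_le (d := d)
  | (n + 1) => by
      intro t ht
      have hdM : (0:ℝ) ≤ d * M := by positivity
      have hgc : Continuous fun τ : ℝ => (d * M) ^ (n + 1) / n.factorial * |τ - c| ^ n :=
        continuous_const.mul (((continuous_id.sub continuous_const).abs).pow n)
      have hg : IntervalIntegrable
          (fun τ => (d * M) ^ (n + 1) / n.factorial * |τ - c| ^ n) volume c t :=
        hgc.intervalIntegrable c t
      have hbound : ‖pbIter A c (n + 1) t‖
          ≤ |∫ τ in c..t, (d * M) ^ (n + 1) / n.factorial * |τ - c| ^ n| := by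
        refine intervalIntegral.norm_integral_le_abs_of_norm_le ?_ hg
        filter_upwards [ae_restrict_mem measurableSet_uIoc] with τ hτ
        have hτ' : τ ∈ Set.Icc a b :=
          Set.uIcc_subset_Icc hc ht (Set.Ioc_subset_Icc_self hτ)
        calc ‖A τ * pbIter A c n τ‖ ≤ d * ‖A τ‖ * ‖pbIter A c n τ‖ := pb_norm_mul_le _ _
          _ ≤ d * M * ((d * M) ^ n * |τ - c| ^ n / n.factorial) :=
              mul_le_mul (mul_le_mul_of_nonneg_left (hM τ hτ') (by positivity))
                (pb_norm_le hA hc hM0 hM n τ hτ') (norm_nonneg _) hdM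
          _ = (d * M) ^ (n + 1) / n.factorial * |τ - c| ^ n := by ring
      rw [intervalIntegral.integral_const_mul, abs_mul, pb_abs_integral_abs_pow,
        abs_of_nonneg (by positivity)] at hbound
      calc ‖pbIter A c (n + 1) t‖
          ≤ (d * M) ^ (n + 1) / n.factorial * (|t - c| ^ (n + 1) / (n + 1)) := hbound
        _ = (d * M) ^ (n + 1) * |t - c| ^ (n + 1) / (n + 1).factorial := by
            rw [div_mul_div_comm, Nat.factorial_succ]
            push_cast
            rw [mul_comm ((n:ℝ) + 1)]

private lemma pb_flow (hA : ContinuousOn A (Set.Icc a b)) {s t₀ : ℝ}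
    (hs : s ∈ Set.Icc a b) (ht₀ : t₀ ∈ Set.Icc a b) :
    ∀ n, ∀ t ∈ Set.Icc a b,
      pbIter A t₀ n t
        = ∑ k ∈ Finset.range (n + 1), pbIter A s k t * pbIter A t₀ (n - k) s
  | 0 => by
      intro t ht
      simp [pbIter]
  | (n + 1) => by
      intro t ht
      have hsplit : pbIter A t₀ (n + 1) t
          = pbIter A t₀ (n + 1) s + ∫ τ in s..t, A τ * pbIter A t₀ n τ := by
        show (∫ τ in t₀..t, A τ * pbIter A t₀ n τ) = _
        rw [← intervalIntegral.integral_add_adjacent_intervals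
          (pb_intInt hA ht₀ n ht₀ hs) (pb_intInt hA ht₀ n hs ht)]
        rfl
      have hcongr : (∫ τ in s..t, A τ * pbIter A t₀ n τ)
          = ∫ τ in s..t, ∑ k ∈ Finset.range (n + 1),
              (A τ * pbIter A s k τ) * pbIter A t₀ (n - k) s := by
        refine intervalIntegral.integral_congr fun τ hτ => ?_
        have hτ' : τ ∈ Set.Icc a b := Set.uIcc_subset_Icc hs ht hτ
        rw [pb_flow hA hs ht₀ n τ hτ', Finset.mul_sum]
        simp [mul_assoc]
      have hii : ∀ k ∈ Finset.range (n + 1), IntervalIntegrable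
          (fun τ => (A τ * pbIter A s k τ) * pbIter A t₀ (n - k) s) volume s t :=
        fun k _ => (((hA.mul (pb_contOn hA hs k)).mul continuousOn_const).mono
          (Set.uIcc_subset_Icc hs ht)).intervalIntegrable
      have hpull : ∀ k, (∫ τ in s..t, (A τ * pbIter A s k τ) * pbIter A t₀ (n - k) s)
          = pbIter A s (k + 1) t * pbIter A t₀ (n - k) s := by
        intro k
        have hL := (LinearMap.toContinuousLinearMap
          (LinearMap.mulRight ℝ (pbIter A t₀ (n - k) s))).intervalIntegral_comp_comm
          (pb_intInt hA hs k hs ht)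
        calc (∫ τ in s..t, (A τ * pbIter A s k τ) * pbIter A t₀ (n - k) s)
            = (∫ τ in s..t, A τ * pbIter A s k τ) * pbIter A t₀ (n - k) s := by
              exact hL
          _ = pbIter A s (k + 1) t * pbIter A t₀ (n - k) s := rfl
      rw [hsplit, hcongr, intervalIntegral.integral_finset_sum hii]
      rw [Finset.sum_congr rfl (fun k _ => hpull k)]
      conv_rhs => rw [Finset.sum_range_succ']
      simp only [Nat.succ_sub_succ_eq_sub, Nat.sub_zero]
      rw [show pbIter A s 0 t = (1 : Matrix (Fin d) (Fin d) ℝ) from rfl, one_mul, add_comm]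

end Aux

theorem stmt12 {d : ℕ} (hd : 1 ≤ d) (A : ℝ → Matrix (Fin d) (Fin d) ℝ)
    (I : Set ℝ) (hI : I.OrdConnected) (hA : ContinuousOn A I) :
    ∀ t ∈ I, ∀ s ∈ I, ∀ t₀ ∈ I,
      (∑' n : ℕ, pbIter A s n t) * (∑' n : ℕ, pbIter A t₀ n s)
        = ∑' n : ℕ, pbIter A t₀ n t := by
  intro t ht s hs t₀ ht₀
  set a := min t (min s t₀) with ha
  set b := max t (max s t₀) with hb
  have haI : a ∈ I := min_rec' (· ∈ I) ht (min_rec' (· ∈ I) hs ht₀)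
  have hbI : b ∈ I := max_rec' (· ∈ I) ht (max_rec' (· ∈ I) hs ht₀)
  have hsub : Set.Icc a b ⊆ I := hI.out haI hbI
  have hA' : ContinuousOn A (Set.Icc a b) := hA.mono hsub
  have ht' : t ∈ Set.Icc a b := ⟨min_le_left _ _, le_max_left _ _⟩
  have hs' : s ∈ Set.Icc a b :=
    ⟨le_trans (min_le_right _ _) (min_le_left _ _),
     le_trans (le_max_left _ _) (le_max_right _ _)⟩
  have ht₀' : t₀ ∈ Set.Icc a b :=
    ⟨le_trans (min_le_right _ _) (min_le_right _ _),
     le_trans (le_max_right _ _) (le_max_right _ _)⟩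
  obtain ⟨M₀, hM₀⟩ := isCompact_Icc.exists_bound_of_continuousOn hA'
  set M := max M₀ 0 with hM
  have hM0 : (0:ℝ) ≤ M := le_max_right _ _
  have hMb : ∀ τ ∈ Set.Icc a b, ‖A τ‖ ≤ M :=
    fun τ hτ => le_trans (hM₀ τ hτ) (le_max_left _ _)
  -- summability
  have hnf : ∀ n, ‖pbIter A s n t‖ ≤ (d * M * |t - s|) ^ n / n.factorial := by
    intro n
    rw [mul_pow]
    exact pb_norm_le hA' hs' hM0 hMb n t ht'
  have hng : ∀ n, ‖pbIter A t₀ n s‖ ≤ (d * M * |s - t₀|) ^ n / n.factorial := by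
    intro n
    rw [mul_pow]
    exact pb_norm_le hA' ht₀' hM0 hMb n s hs'
  have hfn : Summable (fun n => pbIter A s n t) :=
    Summable.of_norm_bounded (Real.summable_pow_div_factorial _) hnf
  have hgn : Summable (fun n => pbIter A t₀ n s) :=
    Summable.of_norm_bounded (Real.summable_pow_div_factorial _) hng
  have upos : ∀ n, (0:ℝ) ≤ (d * M * |t - s|) ^ n / n.factorial := fun n => by positivity
  have vpos : ∀ n, (0:ℝ) ≤ (d * M * |s - t₀|) ^ n / n.factorial := fun n => by positivity
  have hfg : Summable (fun x : ℕ × ℕ => pbIter A s x.1 t * pbIter A t₀ x.2 s) := by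
    refine Summable.of_norm_bounded (g :=
      (fun x : ℕ × ℕ => d * ((d * M * |t - s|) ^ x.1 / x.1.factorial
        * ((d * M * |s - t₀|) ^ x.2 / x.2.factorial))))
      (((Real.summable_pow_div_factorial _).mul_of_nonneg
        (Real.summable_pow_div_factorial _) upos vpos).mul_left _) ?_
    intro x
    calc ‖pbIter A s x.1 t * pbIter A t₀ x.2 s‖
        ≤ d * ‖pbIter A s x.1 t‖ * ‖pbIter A t₀ x.2 s‖ := pb_norm_mul_le _ _
      _ ≤ d * ((d * M * |t - s|) ^ x.1 / x.1.factorial)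
            * ((d * M * |s - t₀|) ^ x.2 / x.2.factorial) := by
          gcongr
          · exact hnf x.1
          · exact hng x.2
      _ = _ := by ring
  rw [hfn.tsum_mul_tsum_eq_tsum_sum_antidiagonal hgn hfg]
  refine tsum_congr fun n => ?_
  rw [Finset.Nat.sum_antidiagonal_eq_sum_range_succ_mk]
  exact (pb_flow hA' hs' ht₀' n t ht').symm
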